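/- arXiv:2310.06194 — 5 statements merged into one kernel-verified Lean document; each statement's English description precedes it below -/
import Mathlib

section
/- Let h : ℝ^n → ℝ be a convex, nonnegative, continuously differentiable function whose gradient is L-Lipschitz. Then for all x, x' ∈ ℝ^n and every η > 0, h(x) - (1+η)·h(x') ≤ (L/2)·(1 + 1/η)·‖x - x'‖². -/
open RealInnerProductSpace intervalIntegral

/-- Descent lemma. -/
lemma descent_aux {n : ℕ} (h : EuclideanSpace ℝ (Fin n) → ℝ) (L : ℝ) (hL : 0 ≤ L)
    (hdiff : ContDiff ℝ 1 h)
    (hlip : LipschitzWith (Real.toNNReal L) (gradient h)) (a b : EuclideanSpace ℝ (Fin n)) :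
    h b ≤ h a + ⟪gradient h a, b - a⟫ + L / 2 * ‖b - a‖ ^ 2 := by
  set d := b - a with hd
  have hdiffb : Differentiable ℝ h := hdiff.differentiable one_ne_zero
  have hline : ∀ t : ℝ, HasDerivAt (fun t : ℝ => a + t • d) d t := by
    intro t
    simpa using ((hasDerivAt_id t).smul_const d).const_add a
  have hg' : ∀ t : ℝ, HasDerivAt (fun t : ℝ => h (a + t • d))
      ⟪gradient h (a + t • d), d⟫ t := by
    intro t
    have hF : HasFDerivAt h (InnerProductSpace.toDual ℝ _ (gradient h (a + t • d))) (a + t • d) :=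
      (hdiffb (a + t • d)).hasGradientAt
    simpa only [Function.comp_def, InnerProductSpace.toDual_apply_apply] using hF.comp_hasDerivAt t (hline t)
  have hcont : Continuous fun t : ℝ => ⟪gradient h (a + t • d), d⟫ := by
    exact (hlip.continuous.comp (continuous_const.add (continuous_id.smul continuous_const))).inner continuous_const
  have hint : ∫ t in (0:ℝ)..1, ⟪gradient h (a + t • d), d⟫ = h b - h a := by
    have := intervalIntegral.integral_eq_sub_of_hasDerivAt
      (f := fun t : ℝ => h (a + t • d)) (f' := fun t => ⟪gradient h (a + t • d), d⟫)
      (a := 0) (b := 1) (fun t _ => hg' t) (hcont.intervalIntegrable 0 1)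
    simpa [hd] using this
  have hbound : ∀ t ∈ Set.Icc (0:ℝ) 1,
      ⟪gradient h (a + t • d), d⟫ ≤ ⟪gradient h a, d⟫ + L * t * ‖d‖ ^ 2 := by
    intro t ht
    have h1 : ⟪gradient h (a + t • d), d⟫ - ⟪gradient h a, d⟫
        = ⟪gradient h (a + t • d) - gradient h a, d⟫ := by
      rw [inner_sub_left]
    have h2 : ‖gradient h (a + t • d) - gradient h a‖ ≤ L * (t * ‖d‖) := by
      have := hlip.dist_le_mul (a + t • d) a
      rw [Real.coe_toNNReal L hL] at this
      have hdist : dist (a + t • d) a = t * ‖d‖ := by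
        simp [dist_eq_norm, norm_smul, abs_of_nonneg ht.1]
      rw [hdist] at this
      simpa [dist_eq_norm] using this
    have h3 : ⟪gradient h (a + t • d) - gradient h a, d⟫ ≤ L * (t * ‖d‖) * ‖d‖ :=
      le_trans (real_inner_le_norm _ _) (by
        apply mul_le_mul_of_nonneg_right h2 (norm_nonneg _))
    nlinarith [h3, h1]
  have hineq : h b - h a ≤ ∫ t in (0:ℝ)..1, (⟪gradient h a, d⟫ + L * t * ‖d‖ ^ 2) := by
    rw [← hint]
    apply intervalIntegral.integral_mono_on (by norm_num)
      (hcont.intervalIntegrable 0 1)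
      ((continuous_const.add (((continuous_const.mul continuous_id).mul continuous_const)) : Continuous fun t : ℝ => ⟪gradient h a, d⟫ + L * t * ‖d‖ ^ 2).intervalIntegrable 0 1)
      hbound
  have hcalc : ∫ t in (0:ℝ)..1, (⟪gradient h a, d⟫ + L * t * ‖d‖ ^ 2)
      = ⟪gradient h a, d⟫ + L / 2 * ‖d‖ ^ 2 := by
    rw [intervalIntegral.integral_add (intervalIntegrable_const)]
    · simp [intervalIntegral.integral_const, mul_assoc, intervalIntegral.integral_const_mul]
      ring
    · exact (((continuous_const.mul continuous_id).mul continuous_const) : Continuous fun t : ℝ => L * t * ‖d‖ ^ 2).intervalIntegrable 0 1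
  rw [hcalc] at hineq
  linarith

/-- Lemma F.2: for a convex, nonnegative, continuously differentiable function `h`
with `L`-Lipschitz gradient, `h x - (1+η) h x' ≤ (L/2)(1 + 1/η) ‖x - x'‖²`. -/
theorem stmt_0 {n : ℕ} (h : EuclideanSpace ℝ (Fin n) → ℝ) (L : ℝ) (hL : 0 ≤ L)
    (hconv : ConvexOn ℝ Set.univ h)
    (hnonneg : ∀ x, 0 ≤ h x)
    (hdiff : ContDiff ℝ 1 h)
    (hlip : LipschitzWith (Real.toNNReal L) (gradient h)) :
    ∀ (x x' : EuclideanSpace ℝ (Fin n)) (η : ℝ), 0 < η →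
      h x - (1 + η) * h x' ≤ (L / 2) * (1 + 1 / η) * ‖x - x'‖ ^ 2 := by
  intro x x' η hη
  have desc := descent_aux h L hL hdiff hlip
  have key : ∀ (y : EuclideanSpace ℝ (Fin n)) (t : ℝ), 0 ≤ t →
      t * ‖gradient h y‖ ^ 2 - L * t ^ 2 / 2 * ‖gradient h y‖ ^ 2 ≤ h y := by
    intro y t ht
    have hdy := desc y (y - t • gradient h y)
    have hn := hnonneg (y - t • gradient h y)
    have h1 : ⟪gradient h y, (y - t • gradient h y) - y⟫
        = -(t * ‖gradient h y‖ ^ 2) := by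
      have he : (y - t • gradient h y) - y = -(t • gradient h y) := by abel
      rw [he, inner_neg_right, real_inner_smul_right, real_inner_self_eq_norm_sq]
    have h2 : ‖(y - t • gradient h y) - y‖ = t * ‖gradient h y‖ := by
      have he : (y - t • gradient h y) - y = -(t • gradient h y) := by abel
      rw [he, norm_neg, norm_smul, Real.norm_eq_abs, abs_of_nonneg ht]
    rw [h1, h2] at hdy
    nlinarith [hdy, hn]
  have hgrad : ∀ y, ‖gradient h y‖ ^ 2 ≤ 2 * L * h y := by
    intro y
    rcases eq_or_lt_of_le hL with hL0 | hLpos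
    · rw [← hL0]
      simp only [mul_zero, zero_mul]
      by_contra hpos
      push_neg at hpos
      have ht : (0:ℝ) ≤ (h y + 1) / ‖gradient h y‖ ^ 2 :=
        le_of_lt (div_pos (by linarith [hnonneg y]) hpos)
      have hk := key y ((h y + 1) / ‖gradient h y‖ ^ 2) ht
      rw [← hL0] at hk
      rw [div_mul_cancel₀ _ (ne_of_gt hpos)] at hk
      simp only [zero_mul, zero_div, sub_zero] at hk
      linarith
    · have hk := key y (1 / L) (le_of_lt (one_div_pos.mpr hLpos))
      have hL2 : L ≠ 0 := ne_of_gt hLpos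
      have h2 : 1 / L * ‖gradient h y‖ ^ 2 - L * (1 / L) ^ 2 / 2 * ‖gradient h y‖ ^ 2
          = ‖gradient h y‖ ^ 2 / (2 * L) := by field_simp; ring
      rw [h2] at hk
      calc ‖gradient h y‖ ^ 2 = (‖gradient h y‖ ^ 2 / (2 * L)) * (2 * L) := by field_simp
        _ ≤ h y * (2 * L) := mul_le_mul_of_nonneg_right hk (by linarith)
        _ = 2 * L * h y := by ring
  have hd := desc x' x
  have hcs : ⟪gradient h x', x - x'⟫ ≤ ‖gradient h x'‖ * ‖x - x'‖ := real_inner_le_norm _ _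
  have hg := hgrad x'
  have hin : ‖gradient h x'‖ * ‖x - x'‖ ≤ η * h x' + L / (2 * η) * ‖x - x'‖ ^ 2 := by
    rcases eq_or_lt_of_le hL with hL0 | hLpos
    · have h0 : ‖gradient h x'‖ ^ 2 = 0 := by
        rw [← hL0] at hg
        simp only [mul_zero, zero_mul] at hg
        exact le_antisymm hg (sq_nonneg _)
      have hz : ‖gradient h x'‖ = 0 := (pow_eq_zero_iff (two_ne_zero)).mp h0
      rw [hz, zero_mul]
      have hrhs : 0 ≤ L / (2 * η) * ‖x - x'‖ ^ 2 :=
        mul_nonneg (div_nonneg hL (by linarith)) (sq_nonneg _)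
      nlinarith [hnonneg x', hη]
    · have key2 : 0 ≤ (η * ‖gradient h x'‖ - L * ‖x - x'‖) ^ 2 := sq_nonneg _
      have hηL : 0 < 2 * η * L := by positivity
      rw [← mul_le_mul_iff_right₀ hηL]
      have expand : 2 * η * L * (η * h x' + L / (2 * η) * ‖x - x'‖ ^ 2)
          = 2 * L * h x' * η ^ 2 + L ^ 2 * ‖x - x'‖ ^ 2 := by field_simp
      rw [expand]
      nlinarith [key2, hg, mul_le_mul_of_nonneg_left hg (sq_nonneg η), hη]
  have hd2 : ⟪gradient h x', x - x'⟫ ≤ η * h x' + L / (2 * η) * ‖x - x'‖ ^ 2 :=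
    le_trans hcs hin
  have hfin : L / 2 * ‖x - x'‖ ^ 2 + L / (2 * η) * ‖x - x'‖ ^ 2
      = L / 2 * (1 + 1 / η) * ‖x - x'‖ ^ 2 := by field_simp
  linarith [hd, hd2, hfin.le, hfin.ge]
end

section
/- Let H = [[G, Jᵀ],[J, 0]] where G is symmetric with μI ⪯ G ⪯ L_H·I (μ > 0), J has full row rank with JJᵀ ⪰ μ_J·I (μ_J > 0), and ‖J‖ ≤ L_H. Then H is invertible and ‖H⁻¹‖ ≤ 1/μ + (1 + 2·L_H/μ + L_H²/μ²)·(L_H/μ_J). -/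
open Matrix

/-- The ℓ²→ℓ² operator (spectral) norm of a real matrix. -/
noncomputable def matOpNorm {α β : Type*} [Fintype α] [Fintype β] [DecidableEq β]
    (M : Matrix α β ℝ) : ℝ :=
  ‖(Matrix.toEuclideanLin M).toContinuousLinearMap‖

open scoped Matrix.Norms.L2Operator

namespace KKTAux

variable {k l : Type*} [Fintype k] [Fintype l]

lemma matOpNorm_eq_norm [DecidableEq l] (M : Matrix k l ℝ) : matOpNorm M = ‖M‖ := rfl

lemma dot_self_nonneg (x : k → ℝ) : 0 ≤ x ⬝ᵥ x :=
  Finset.sum_nonneg fun i _ => mul_self_nonneg (x i)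

lemma dot_self_pos {x : k → ℝ} (hx : x ≠ 0) : 0 < x ⬝ᵥ x :=
  lt_of_le_of_ne (dot_self_nonneg x) fun h => hx (dotProduct_self_eq_zero.mp h.symm)

lemma enorm_sq (u : k → ℝ) :
    ‖(WithLp.equiv 2 (k → ℝ)).symm u‖ ^ 2 = u ⬝ᵥ u := by
  rw [EuclideanSpace.norm_eq, Real.sq_sqrt (by positivity)]
  simp [dotProduct, Real.norm_eq_abs, sq, abs_mul_abs_self]

lemma inner_eq_dot (u v : k → ℝ) :
    (inner ℝ ((WithLp.equiv 2 (k → ℝ)).symm u) ((WithLp.equiv 2 (k → ℝ)).symm v) : ℝ)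
      = u ⬝ᵥ v := by
  simp [PiLp.inner_apply, dotProduct, RCLike.inner_apply, conj_trivial, mul_comm]

/-- coercivity from a shifted PSD hypothesis -/
lemma coer_of_psd [DecidableEq k] {A : Matrix k k ℝ} {c : ℝ}
    (h : (A - c • (1 : Matrix k k ℝ)).PosSemidef) (x : k → ℝ) :
    c * (x ⬝ᵥ x) ≤ x ⬝ᵥ (A *ᵥ x) := by
  have h0 := h.dotProduct_mulVec_nonneg x
  simp only [star_trivial, Matrix.sub_mulVec, Matrix.smul_mulVec, Matrix.one_mulVec,
    dotProduct_sub, dotProduct_smul, smul_eq_mul] at h0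
  linarith

/-- upper bound on the quadratic form from a shifted PSD hypothesis -/
lemma form_le_of_psd [DecidableEq k] {A : Matrix k k ℝ} {c : ℝ}
    (h : (c • (1 : Matrix k k ℝ) - A).PosSemidef) (x : k → ℝ) :
    x ⬝ᵥ (A *ᵥ x) ≤ c * (x ⬝ᵥ x) := by
  have h0 := h.dotProduct_mulVec_nonneg x
  simp only [star_trivial, Matrix.sub_mulVec, Matrix.smul_mulVec, Matrix.one_mulVec,
    dotProduct_sub, dotProduct_smul, smul_eq_mul] at h0
  linarith

lemma dot_symm {A : Matrix k k ℝ} (hA : Aᵀ = A) (u v : k → ℝ) :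
    u ⬝ᵥ (A *ᵥ v) = v ⬝ᵥ (A *ᵥ u) := by
  rw [Matrix.dotProduct_mulVec, ← Matrix.mulVec_transpose, hA, dotProduct_comm]

/-- Cauchy–Schwarz for the quadratic form of a PSD symmetric real matrix. -/
lemma psd_cauchy_schwarz {A : Matrix k k ℝ} (hA : A.PosSemidef) (hAt : Aᵀ = A)
    (x y : k → ℝ) :
    (x ⬝ᵥ (A *ᵥ y)) ^ 2 ≤ (x ⬝ᵥ (A *ᵥ x)) * (y ⬝ᵥ (A *ᵥ y)) := by
  have key : ∀ t : ℝ,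
      0 ≤ (y ⬝ᵥ (A *ᵥ y)) * (t * t) + (2 * (x ⬝ᵥ (A *ᵥ y))) * t + x ⬝ᵥ (A *ᵥ x) := by
    intro t
    have h0 := hA.dotProduct_mulVec_nonneg (x + t • y)
    simp only [star_trivial, Matrix.mulVec_add, Matrix.mulVec_smul, add_dotProduct,
      dotProduct_add, smul_dotProduct, dotProduct_smul,
      smul_eq_mul] at h0
    have hsy : y ⬝ᵥ (A *ᵥ x) = x ⬝ᵥ (A *ᵥ y) := dot_symm hAt y x
    rw [hsy] at h0
    ring_nf at h0 ⊢
    linarith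
  have hd := discrim_le_zero key
  rw [discrim] at hd
  nlinarith [hd]

lemma schur_arith {L X s q c : ℝ} (hL : 0 < L) (h2 : c * X ≤ s)
    (hq0 : s ^ 2 ≤ L * s * q) (hs0 : 0 ≤ s) (h6 : 0 ≤ q) (hX : 0 ≤ X) (hc : 0 < c) :
    c * X ≤ q * L := by
  rcases hs0.lt_or_eq with hsp | hse
  · have hle : s ≤ L * q := by nlinarith
    nlinarith
  · nlinarith [mul_nonneg h6 hL.le]

/-- Norm bound for the inverse of a coercive matrix. -/
lemma inv_opNorm_le [DecidableEq k] {A : Matrix k k ℝ} {c : ℝ} (hc : 0 < c)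
    (hA : A * A⁻¹ = 1)
    (hco : ∀ x : k → ℝ, c * (x ⬝ᵥ x) ≤ x ⬝ᵥ (A *ᵥ x)) :
    ‖A⁻¹‖ ≤ 1 / c := by
  rw [Matrix.l2_opNorm_def]
  refine ContinuousLinearMap.opNorm_le_bound _ (by positivity) fun v => ?_
  show ‖(WithLp.equiv 2 (k → ℝ)).symm (A⁻¹ *ᵥ (WithLp.equiv 2 (k → ℝ)) v)‖ ≤ 1 / c * ‖v‖
  set yf : k → ℝ := A⁻¹ *ᵥ (WithLp.equiv 2 (k → ℝ)) v with hyf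
  have hAy : A *ᵥ yf = (WithLp.equiv 2 (k → ℝ)) v := by
    rw [hyf, Matrix.mulVec_mulVec, hA, Matrix.one_mulVec]
  have h1 : c * (yf ⬝ᵥ yf) ≤ yf ⬝ᵥ (WithLp.equiv 2 (k → ℝ)) v := by
    have := hco yf; rwa [hAy] at this
  have h2 : yf ⬝ᵥ (WithLp.equiv 2 (k → ℝ)) v ≤ ‖(WithLp.equiv 2 (k → ℝ)).symm yf‖ * ‖v‖ := by
    have hcs := real_inner_le_norm ((WithLp.equiv 2 (k → ℝ)).symm yf) v
    rw [show v = (WithLp.equiv 2 (k → ℝ)).symm ((WithLp.equiv 2 (k → ℝ)) v) from rfl,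
      inner_eq_dot] at hcs
    simpa using hcs
  have h3 : ‖(WithLp.equiv 2 (k → ℝ)).symm yf‖ ^ 2 = yf ⬝ᵥ yf := enorm_sq yf
  set a := ‖(WithLp.equiv 2 (k → ℝ)).symm yf‖ with ha
  have ha0 : 0 ≤ a := norm_nonneg _
  have hv0 : 0 ≤ ‖v‖ := norm_nonneg _
  have hkey : c * a ^ 2 ≤ a * ‖v‖ := by
    calc c * a ^ 2 = c * (yf ⬝ᵥ yf) := by rw [h3]
      _ ≤ yf ⬝ᵥ (WithLp.equiv 2 (k → ℝ)) v := h1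
      _ ≤ a * ‖v‖ := h2
  rcases eq_or_lt_of_le ha0 with h | h
  · rw [← h]; positivity
  · rw [one_div, inv_mul_eq_div, le_div_iff₀ hc]
    nlinarith

lemma enorm_sq' (x : EuclideanSpace ℝ k) : ‖x‖ ^ 2 = ∑ i, ‖x i‖ ^ 2 := by
  rw [EuclideanSpace.norm_eq, Real.sq_sqrt (by positivity)]

/-- multiplicativity helper -/
lemma norm_mul_le_of {α β γ : Type*} [Fintype α] [Fintype β] [Fintype γ]
    [DecidableEq β] [DecidableEq γ]
    {A : Matrix α β ℝ} {B : Matrix β γ ℝ} {x y : ℝ}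
    (hA : ‖A‖ ≤ x) (hB : ‖B‖ ≤ y) (hx : 0 ≤ x) : ‖A * B‖ ≤ x * y :=
  (Matrix.l2_opNorm_mul A B).trans (mul_le_mul hA hB (norm_nonneg _) hx)

/-- block norm bound -/
lemma norm_fromBlocks_le {a b c d : Type*} [Fintype a] [Fintype b] [Fintype c] [Fintype d]
    [DecidableEq b] [DecidableEq d]
    (A : Matrix a b ℝ) (B : Matrix a d ℝ) (C : Matrix c b ℝ) (D : Matrix c d ℝ) :
    ‖Matrix.fromBlocks A B C D‖ ≤ ‖A‖ + ‖B‖ + ‖C‖ + ‖D‖ := by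
  rw [Matrix.l2_opNorm_def]
  refine ContinuousLinearMap.opNorm_le_bound _ (by positivity) fun x => ?_
  show ‖(WithLp.equiv 2 ((a ⊕ c) → ℝ)).symm
      (Matrix.fromBlocks A B C D *ᵥ (WithLp.equiv 2 ((b ⊕ d) → ℝ)) x)‖
    ≤ (‖A‖ + ‖B‖ + ‖C‖ + ‖D‖) * ‖x‖
  set xf : (b ⊕ d) → ℝ := (WithLp.equiv 2 ((b ⊕ d) → ℝ)) x with hxf
  set x₁ : EuclideanSpace ℝ b := (WithLp.equiv 2 (b → ℝ)).symm fun i => xf (Sum.inl i) with hx1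
  set x₂ : EuclideanSpace ℝ d := (WithLp.equiv 2 (d → ℝ)).symm fun i => xf (Sum.inr i) with hx2
  have hmv : Matrix.fromBlocks A B C D *ᵥ xf
      = Sum.elim (A *ᵥ (fun i => xf (Sum.inl i)) + B *ᵥ (fun i => xf (Sum.inr i)))
          (C *ᵥ (fun i => xf (Sum.inl i)) + D *ᵥ (fun i => xf (Sum.inr i))) :=
    Matrix.fromBlocks_mulVec A B C D xf
  rw [hmv]
  have hsplit : ∀ (u : a → ℝ) (v : c → ℝ),
      ‖(WithLp.equiv 2 ((a ⊕ c) → ℝ)).symm (Sum.elim u v)‖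
        ≤ ‖(WithLp.equiv 2 (a → ℝ)).symm u‖ + ‖(WithLp.equiv 2 (c → ℝ)).symm v‖ := by
    intro u v
    have h1 : ‖(WithLp.equiv 2 ((a ⊕ c) → ℝ)).symm (Sum.elim u v)‖ ^ 2
        = ‖(WithLp.equiv 2 (a → ℝ)).symm u‖ ^ 2 + ‖(WithLp.equiv 2 (c → ℝ)).symm v‖ ^ 2 := by
      rw [enorm_sq, enorm_sq, enorm_sq]
      simp only [dotProduct]
      rw [Fintype.sum_sum_type]
      simp
    nlinarith [norm_nonneg ((WithLp.equiv 2 ((a ⊕ c) → ℝ)).symm (Sum.elim u v)),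
      norm_nonneg ((WithLp.equiv 2 (a → ℝ)).symm u),
      norm_nonneg ((WithLp.equiv 2 (c → ℝ)).symm v),
      mul_nonneg (norm_nonneg ((WithLp.equiv 2 (a → ℝ)).symm u))
        (norm_nonneg ((WithLp.equiv 2 (c → ℝ)).symm v))]
  refine le_trans (hsplit _ _) ?_
  have hx12 : ‖x₁‖ ^ 2 + ‖x₂‖ ^ 2 = ‖x‖ ^ 2 := by
    rw [hx1, hx2, enorm_sq, enorm_sq]
    have hxe : ‖x‖ ^ 2 = xf ⬝ᵥ xf := enorm_sq xf
    rw [hxe]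
    simp only [dotProduct]
    rw [Fintype.sum_sum_type]
  have hx1n : ‖x₁‖ ≤ ‖x‖ := by
    nlinarith [norm_nonneg x₁, norm_nonneg x₂, norm_nonneg x]
  have hx2n : ‖x₂‖ ≤ ‖x‖ := by
    nlinarith [norm_nonneg x₁, norm_nonneg x₂, norm_nonneg x]
  have hadd1 : (WithLp.equiv 2 (a → ℝ)).symm
        (A *ᵥ (fun i => xf (Sum.inl i)) + B *ᵥ (fun i => xf (Sum.inr i)))
      = (WithLp.equiv 2 (a → ℝ)).symm (A *ᵥ (fun i => xf (Sum.inl i)))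
        + (WithLp.equiv 2 (a → ℝ)).symm (B *ᵥ (fun i => xf (Sum.inr i))) := rfl
  have hadd2 : (WithLp.equiv 2 (c → ℝ)).symm
        (C *ᵥ (fun i => xf (Sum.inl i)) + D *ᵥ (fun i => xf (Sum.inr i)))
      = (WithLp.equiv 2 (c → ℝ)).symm (C *ᵥ (fun i => xf (Sum.inl i)))
        + (WithLp.equiv 2 (c → ℝ)).symm (D *ᵥ (fun i => xf (Sum.inr i))) := rfl
  rw [hadd1, hadd2]
  have e1 : ‖(WithLp.equiv 2 (a → ℝ)).symm (A *ᵥ (fun i => xf (Sum.inl i)))‖ ≤ ‖A‖ * ‖x₁‖ :=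
    Matrix.l2_opNorm_mulVec A x₁
  have e2 : ‖(WithLp.equiv 2 (a → ℝ)).symm (B *ᵥ (fun i => xf (Sum.inr i)))‖ ≤ ‖B‖ * ‖x₂‖ :=
    Matrix.l2_opNorm_mulVec B x₂
  have e3 : ‖(WithLp.equiv 2 (c → ℝ)).symm (C *ᵥ (fun i => xf (Sum.inl i)))‖ ≤ ‖C‖ * ‖x₁‖ :=
    Matrix.l2_opNorm_mulVec C x₁
  have e4 : ‖(WithLp.equiv 2 (c → ℝ)).symm (D *ᵥ (fun i => xf (Sum.inr i)))‖ ≤ ‖D‖ * ‖x₂‖ :=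
    Matrix.l2_opNorm_mulVec D x₂
  have t1 := norm_add_le ((WithLp.equiv 2 (a → ℝ)).symm (A *ᵥ (fun i => xf (Sum.inl i))))
    ((WithLp.equiv 2 (a → ℝ)).symm (B *ᵥ (fun i => xf (Sum.inr i))))
  have t2 := norm_add_le ((WithLp.equiv 2 (c → ℝ)).symm (C *ᵥ (fun i => xf (Sum.inl i))))
    ((WithLp.equiv 2 (c → ℝ)).symm (D *ᵥ (fun i => xf (Sum.inr i))))
  have hAn : (0:ℝ) ≤ ‖A‖ := norm_nonneg _
  have hBn : (0:ℝ) ≤ ‖B‖ := norm_nonneg _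
  have hCn : (0:ℝ) ≤ ‖C‖ := norm_nonneg _
  have hDn : (0:ℝ) ≤ ‖D‖ := norm_nonneg _
  nlinarith [mul_le_mul_of_nonneg_left hx1n hAn, mul_le_mul_of_nonneg_left hx2n hBn,
    mul_le_mul_of_nonneg_left hx1n hCn, mul_le_mul_of_nonneg_left hx2n hDn]

end KKTAux

open KKTAux

set_option maxHeartbeats 1000000 in
/-- KKT matrix bound: for `H = [[G, Jᵀ],[J, 0]]` with `μ I ⪯ G ⪯ L_H I`, `J` of full row
rank with `J Jᵀ ⪰ μ_J I` and `‖J‖ ≤ L_H`, the matrix `H` is invertible and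
`‖H⁻¹‖ ≤ 1/μ + (1 + 2 L_H/μ + L_H²/μ²)(L_H/μ_J)`. -/
theorem stmt_4 {n m : ℕ} (G : Matrix (Fin n) (Fin n) ℝ) (J : Matrix (Fin m) (Fin n) ℝ)
    (μ LH μJ : ℝ) (hμ : 0 < μ) (hμJ : 0 < μJ)
    (hGsymm : G.IsSymm)
    (hGlo : (G - μ • (1 : Matrix (Fin n) (Fin n) ℝ)).PosSemidef)
    (hGhi : (LH • (1 : Matrix (Fin n) (Fin n) ℝ) - G).PosSemidef)
    (hJrank : J.rank = m)
    (hJJ : (J * Jᵀ - μJ • (1 : Matrix (Fin m) (Fin m) ℝ)).PosSemidef)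
    (hJnorm : matOpNorm J ≤ LH) :
    IsUnit (Matrix.fromBlocks G Jᵀ J 0) ∧
      matOpNorm (Matrix.fromBlocks G Jᵀ J 0)⁻¹ ≤
        1 / μ + (1 + 2 * LH / μ + LH ^ 2 / μ ^ 2) * (LH / μJ) := by
  classical
  have hct : ∀ {p q : Type} [Fintype p] [Fintype q] (M : Matrix p q ℝ), Mᴴ = Mᵀ := by
    intro p q _ _ M; ext i j; simp [Matrix.conjTranspose_apply]
  have hGherm : G.IsHermitian := by
    unfold Matrix.IsHermitian; rw [hct]; exact hGsymm
  have hGpd : G.PosDef := by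
    refine Matrix.PosDef.of_dotProduct_mulVec_pos hGherm fun x hx => ?_
    have h1 := coer_of_psd hGlo x
    have h2 : 0 < x ⬝ᵥ x := dot_self_pos hx
    simp only [star_trivial]
    nlinarith
  have hGdet : IsUnit G.det := hGpd.det_pos.ne'.isUnit
  have hG1 : G * G⁻¹ = 1 := Matrix.mul_nonsing_inv G hGdet
  have hGinvpd : G⁻¹.PosDef := hGpd.inv
  -- the Schur complement
  set S : Matrix (Fin m) (Fin m) ℝ := J * G⁻¹ * Jᵀ with hS
  have hSpsd : S.PosSemidef := by
    have h := hGinvpd.posSemidef.conjTranspose_mul_mul_same Jᵀ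
    rwa [hct, Matrix.transpose_transpose] at h
  have hform : ∀ x : Fin m → ℝ, x ⬝ᵥ (S *ᵥ x) = (Jᵀ *ᵥ x) ⬝ᵥ (G⁻¹ *ᵥ (Jᵀ *ᵥ x)) := by
    intro x
    rw [hS, show (J * G⁻¹ * Jᵀ) *ᵥ x = J *ᵥ (G⁻¹ *ᵥ (Jᵀ *ᵥ x)) by
      rw [Matrix.mulVec_mulVec, Matrix.mulVec_mulVec]]
    rw [Matrix.dotProduct_mulVec x J, ← Matrix.mulVec_transpose]
  have hz2 : ∀ x : Fin m → ℝ, μJ * (x ⬝ᵥ x) ≤ (Jᵀ *ᵥ x) ⬝ᵥ (Jᵀ *ᵥ x) := by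
    intro x
    have h1 := coer_of_psd hJJ x
    have h2 : x ⬝ᵥ ((J * Jᵀ) *ᵥ x) = (Jᵀ *ᵥ x) ⬝ᵥ (Jᵀ *ᵥ x) := by
      rw [← Matrix.mulVec_mulVec, Matrix.dotProduct_mulVec x J, ← Matrix.mulVec_transpose]
    linarith [h1, h2.le, h2.ge]
  have hSpd : S.PosDef := by
    refine Matrix.PosDef.of_dotProduct_mulVec_pos hSpsd.1 fun x hx => ?_
    have hz : Jᵀ *ᵥ x ≠ 0 := by
      intro h0
      have h := hz2 x
      rw [h0] at h
      simp only [zero_dotProduct] at h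
      nlinarith [dot_self_pos hx]
    have h := hGinvpd.dotProduct_mulVec_pos hz
    simp only [star_trivial] at h ⊢
    rw [hform x]; exact h
  have hSdet : IsUnit S.det := hSpd.det_pos.ne'.isUnit
  have hS1 : S * S⁻¹ = 1 := Matrix.mul_nonsing_inv S hSdet
  -- explicit inverse
  set P : Matrix (Fin n) (Fin n) ℝ := Jᵀ * (S⁻¹ * (J * G⁻¹)) with hP
  set K : Matrix (Fin n ⊕ Fin m) (Fin n ⊕ Fin m) ℝ :=
    Matrix.fromBlocks (G⁻¹ - G⁻¹ * P) (G⁻¹ * (Jᵀ * S⁻¹)) (S⁻¹ * (J * G⁻¹)) (-S⁻¹) with hK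
  have e11 : G * (G⁻¹ - G⁻¹ * P) + Jᵀ * (S⁻¹ * (J * G⁻¹)) = 1 := by
    rw [Matrix.mul_sub, ← Matrix.mul_assoc, hG1, Matrix.one_mul, ← hP]
    abel
  have e12 : G * (G⁻¹ * (Jᵀ * S⁻¹)) + Jᵀ * (-S⁻¹) = 0 := by
    rw [← Matrix.mul_assoc, hG1, Matrix.one_mul, Matrix.mul_neg]
    abel
  have e21 : J * (G⁻¹ - G⁻¹ * P) + (0 : Matrix (Fin m) (Fin m) ℝ) * (S⁻¹ * (J * G⁻¹)) = 0 := by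
    rw [Matrix.zero_mul, add_zero, hP, Matrix.mul_sub]
    simp only [← Matrix.mul_assoc]
    rw [← hS, hS1, Matrix.one_mul, sub_self]
  have e22 : J * (G⁻¹ * (Jᵀ * S⁻¹)) + (0 : Matrix (Fin m) (Fin m) ℝ) * (-S⁻¹) = 1 := by
    rw [Matrix.zero_mul, add_zero]
    simp only [← Matrix.mul_assoc]
    rw [← hS, hS1]
  have hHK : Matrix.fromBlocks G Jᵀ J 0 * K = 1 := by
    rw [hK, Matrix.fromBlocks_multiply, e11, e12, e21, e22, Matrix.fromBlocks_one]
  have hUnit : IsUnit (Matrix.fromBlocks G Jᵀ J 0) := by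
    refine (Matrix.isUnit_iff_isUnit_det _).2 (IsUnit.of_mul_eq_one K.det ?_)
    rw [← Matrix.det_mul, hHK, Matrix.det_one]
  refine ⟨hUnit, ?_⟩
  have hinv : (Matrix.fromBlocks G Jᵀ J 0)⁻¹ = K := Matrix.inv_eq_right_inv hHK
  rw [matOpNorm_eq_norm, hinv]
  -- norm bounds
  have hJn : ‖J‖ ≤ LH := hJnorm
  have hJTn : ‖Jᵀ‖ ≤ LH := by
    have h : ‖Jᵀ‖ = ‖J‖ := by rw [← hct J]; exact Matrix.l2_opNorm_conjTranspose J
    rw [h]; exact hJn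
  have hLH0 : (0:ℝ) ≤ LH := le_trans (norm_nonneg J) hJn
  have hGinvn : ‖G⁻¹‖ ≤ 1 / μ := inv_opNorm_le hμ hG1 (coer_of_psd hGlo)
  have hSinvn : ‖S⁻¹‖ ≤ LH / μJ := by
    rcases hLH0.lt_or_eq with hpos | h0
    · have hc : 0 < μJ / LH := div_pos hμJ hpos
      have hco : ∀ x : Fin m → ℝ, (μJ / LH) * (x ⬝ᵥ x) ≤ x ⬝ᵥ (S *ᵥ x) := by
        intro x
        set z : Fin n → ℝ := Jᵀ *ᵥ x with hzd
        set w : Fin n → ℝ := G⁻¹ *ᵥ z with hw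
        have hGw : G *ᵥ w = z := by rw [hw, Matrix.mulVec_mulVec, hG1, Matrix.one_mulVec]
        have hq : x ⬝ᵥ (S *ᵥ x) = z ⬝ᵥ w := hform x
        have hq2 : w ⬝ᵥ (G *ᵥ w) = z ⬝ᵥ w := by rw [hGw]; exact dotProduct_comm w z
        have hCS := psd_cauchy_schwarz hGpd.posSemidef hGsymm z w
        have hzz : z ⬝ᵥ (G *ᵥ w) = z ⬝ᵥ z := by rw [hGw]
        have h5 : z ⬝ᵥ (G *ᵥ z) ≤ LH * (z ⬝ᵥ z) := form_le_of_psd hGhi z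
        have h6 : 0 ≤ w ⬝ᵥ (G *ᵥ w) :=
          le_trans (mul_nonneg hμ.le (dot_self_nonneg w)) (coer_of_psd hGlo w)
        have h2 := hz2 x
        rw [hq, ← hq2]
        rw [div_mul_eq_mul_div, div_le_iff₀ hpos]
        have hs0 : 0 ≤ z ⬝ᵥ z := dot_self_nonneg z
        have hxx0 : 0 ≤ x ⬝ᵥ x := dot_self_nonneg x
        have hq0 : (z ⬝ᵥ z) ^ 2 ≤ LH * (z ⬝ᵥ z) * (w ⬝ᵥ (G *ᵥ w)) := by
          calc (z ⬝ᵥ z) ^ 2 = (z ⬝ᵥ (G *ᵥ w)) ^ 2 := by rw [hzz]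
            _ ≤ (z ⬝ᵥ (G *ᵥ z)) * (w ⬝ᵥ (G *ᵥ w)) := hCS
            _ ≤ LH * (z ⬝ᵥ z) * (w ⬝ᵥ (G *ᵥ w)) := mul_le_mul_of_nonneg_right h5 h6
        exact schur_arith hpos h2 hq0 hs0 h6 hxx0 hμJ
      have h := inv_opNorm_le hc hS1 hco
      rwa [one_div_div] at h
    · have hJ0 : J = 0 := by
        have h1 : ‖J‖ ≤ 0 := by rw [h0]; exact hJn
        exact norm_le_zero_iff.mp h1
      have hempty : IsEmpty (Fin m) := by
        by_contra h
        rw [not_isEmpty_iff] at h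
        obtain ⟨i⟩ := h
        have hc := coer_of_psd hJJ (Pi.single i 1)
        rw [hJ0] at hc
        have hxx : (Pi.single i 1 : Fin m → ℝ) ⬝ᵥ (Pi.single i 1) = 1 := by
          simp [dotProduct, Pi.single_apply]
        rw [Matrix.zero_mul, Matrix.zero_mulVec, dotProduct_zero, hxx] at hc
        nlinarith
      have hz : S⁻¹ = 0 := Matrix.ext fun i j => isEmptyElim i
      rw [hz, norm_zero, ← h0, zero_div]
  -- combine
  have hb21 : ‖S⁻¹ * (J * G⁻¹)‖ ≤ (LH / μJ) * (LH * (1 / μ)) :=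
    norm_mul_le_of hSinvn (norm_mul_le_of hJn hGinvn hLH0) (by positivity)
  have hb12 : ‖G⁻¹ * (Jᵀ * S⁻¹)‖ ≤ (1 / μ) * (LH * (LH / μJ)) :=
    norm_mul_le_of hGinvn (norm_mul_le_of hJTn hSinvn hLH0) (by positivity)
  have hbP : ‖P‖ ≤ LH * ((LH / μJ) * (LH * (1 / μ))) := by
    rw [hP]; exact norm_mul_le_of hJTn hb21 hLH0
  have hb11 : ‖G⁻¹ - G⁻¹ * P‖ ≤ 1 / μ + (1 / μ) * (LH * ((LH / μJ) * (LH * (1 / μ)))) :=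
    le_trans (norm_sub_le _ _)
      (add_le_add hGinvn (norm_mul_le_of hGinvn hbP (by positivity)))
  have hb22 : ‖(-S⁻¹ : Matrix (Fin m) (Fin m) ℝ)‖ ≤ LH / μJ := by
    rw [norm_neg]; exact hSinvn
  have hμne : μ ≠ 0 := hμ.ne'
  have hμJne : μJ ≠ 0 := hμJ.ne'
  calc ‖K‖ ≤ ‖G⁻¹ - G⁻¹ * P‖ + ‖G⁻¹ * (Jᵀ * S⁻¹)‖ + ‖S⁻¹ * (J * G⁻¹)‖
      + ‖(-S⁻¹ : Matrix (Fin m) (Fin m) ℝ)‖ := by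
        rw [hK]; exact norm_fromBlocks_le _ _ _ _
    _ ≤ (1 / μ + (1 / μ) * (LH * ((LH / μJ) * (LH * (1 / μ)))))
        + (1 / μ) * (LH * (LH / μJ)) + (LH / μJ) * (LH * (1 / μ)) + LH / μJ := by
        exact add_le_add (add_le_add (add_le_add hb11 hb12) hb21) hb22
    _ = 1 / μ + (1 + 2 * LH / μ + LH ^ 2 / μ ^ 2) * (LH / μJ) := by
        field_simp
        ring
end

section
/- Let c : ℝ^m → ℝ be μ-strongly convex and L-smooth, and let B_z ∈ ℝ^{m×p} have orthonormal columns. Fix v_y, v_y' ∈ ℝ^m and let ω, ω' be the minimizers of ω ↦ c(v_y + B_z ω) and ω ↦ c(v_y' + B_z ω), respectively. Then ‖ω - ω'‖ ≤ (L/μ)·‖v_y - v_y'‖. -/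
open Matrix

/-- View a plain vector as an element of Euclidean space (Euclidean norm). -/
def evec {k : ℕ} (v : Fin k → ℝ) : EuclideanSpace ℝ (Fin k) := WithLp.toLp 2 v

/-- Quadratic growth of a strongly convex function at its minimizer. -/
private lemma minQG {E : Type*} [NormedAddCommGroup E] [NormedSpace ℝ E] {f : E → ℝ} {μ : ℝ}
    (hμ : 0 ≤ μ) (hsc : StrongConvexOn Set.univ μ f) {z : E} (hz : IsMinOn f Set.univ z)
    (w : E) : μ / 2 * ‖z - w‖ ^ 2 ≤ f w - f z := by
  have hmin : ∀ x : E, f z ≤ f x := fun x => isMinOn_iff.mp hz x (Set.mem_univ x)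
  have hfzw : f z ≤ f w := hmin w
  have key : ∀ a : ℝ, 0 ≤ a → a < 1 → a * (μ / 2 * ‖z - w‖ ^ 2) ≤ f w - f z := by
    intro a ha ha1
    have hb : (0 : ℝ) < 1 - a := by linarith
    have h := hsc.2 (Set.mem_univ z) (Set.mem_univ w) ha hb.le (by ring)
    have hm := hmin (a • z + (1 - a) • w)
    simp only [smul_eq_mul] at h
    nlinarith [h, hm, hb]
  by_contra hcon
  push_neg at hcon
  set D := f w - f z with hD
  set φ := μ / 2 * ‖z - w‖ ^ 2 with hφdef
  have hD0 : 0 ≤ D := by simp [hD]; linarith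
  have hφpos : 0 < φ := lt_of_le_of_lt hD0 hcon
  have ha : (0 : ℝ) ≤ (D / φ + 1) / 2 := by positivity
  have ha1 : (D / φ + 1) / 2 < 1 := by
    have : D / φ < 1 := (div_lt_one hφpos).mpr hcon
    linarith
  have hk := key _ ha ha1
  have hcancel : D / φ * φ = D := div_mul_cancel₀ D hφpos.ne'
  nlinarith [hk, hcancel, hφpos]

/-- Difference of shifted copies of a function with Lipschitz gradient is Lipschitz. -/
private lemma lipdiff {E : Type*} [NormedAddCommGroup E] [InnerProductSpace ℝ E]
    [CompleteSpace E] {c : E → ℝ} {L : ℝ} (hdiff : ContDiff ℝ 2 c)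
    (hsmooth : LipschitzWith (Real.toNNReal L) (gradient c)) (u u' x y : E) :
    |(c (x + u') - c (x + u)) - (c (y + u') - c (y + u))| ≤
      (Real.toNNReal L : ℝ) * ‖u' - u‖ * ‖x - y‖ := by
  have hc : Differentiable ℝ c := hdiff.differentiable (by norm_num)
  have hder : ∀ v : E, HasFDerivAt (fun w : E => c (w + u') - c (w + u))
      (fderiv ℝ c (v + u') - fderiv ℝ c (v + u)) v := by
    intro v
    have h1 : HasFDerivAt (fun w : E => c (w + u')) (fderiv ℝ c (v + u')) v := by
      have := (hc (v + u')).hasFDerivAt.comp v ((hasFDerivAt_id v).add_const u')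
      simpa [Function.comp_def] using this
    have h2 : HasFDerivAt (fun w : E => c (w + u)) (fderiv ℝ c (v + u)) v := by
      have := (hc (v + u)).hasFDerivAt.comp v ((hasFDerivAt_id v).add_const u)
      simpa [Function.comp_def] using this
    exact h1.sub h2
  have hbound : ∀ v : E, ‖fderiv ℝ c (v + u') - fderiv ℝ c (v + u)‖ ≤
      (Real.toNNReal L : ℝ) * ‖u' - u‖ := by
    intro v
    have hg := hsmooth.dist_le_mul (v + u') (v + u)
    rw [dist_eq_norm, dist_eq_norm] at hg
    have heq : ‖gradient c (v + u') - gradient c (v + u)‖ =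
        ‖fderiv ℝ c (v + u') - fderiv ℝ c (v + u)‖ := by
      rw [gradient, gradient, ← map_sub, LinearIsometryEquiv.norm_map]
    rw [← heq]
    calc ‖gradient c (v + u') - gradient c (v + u)‖
        ≤ (Real.toNNReal L : ℝ) * ‖(v + u') - (v + u)‖ := hg
      _ = (Real.toNNReal L : ℝ) * ‖u' - u‖ := by rw [add_sub_add_left_eq_sub]
  have hmvt := Convex.norm_image_sub_le_of_norm_fderiv_le
    (f := fun w : E => c (w + u') - c (w + u)) (s := Set.univ)
    (C := (Real.toNNReal L : ℝ) * ‖u' - u‖)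
    (fun v _ => (hder v).differentiableAt)
    (fun v _ => by rw [(hder v).fderiv]; exact hbound v)
    convex_univ (Set.mem_univ y) (Set.mem_univ x)
  rw [Real.norm_eq_abs] at hmvt
  exact hmvt

/-- `Bz` with orthonormal columns preserves the Euclidean norm. -/
private lemma norm_mulVec_eq {m p : ℕ} {Bz : Matrix (Fin m) (Fin p) ℝ} (hBz : Bzᵀ * Bz = 1)
    (w : Fin p → ℝ) : ‖evec (Bz.mulVec w)‖ = ‖evec w‖ := by
  have hdot : (Bz.mulVec w) ⬝ᵥ (Bz.mulVec w) = w ⬝ᵥ w := by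
    rw [Matrix.dotProduct_mulVec, ← Matrix.mulVec_transpose, Matrix.mulVec_mulVec, hBz,
      Matrix.one_mulVec]
  have hnorm : ∀ k (v : Fin k → ℝ), ‖evec v‖ = Real.sqrt (v ⬝ᵥ v) := by
    intro k v
    rw [EuclideanSpace.norm_eq]
    congr 1
    simp [evec, dotProduct, Real.norm_eq_abs, sq_abs, pow_two]
  rw [hnorm, hnorm, hdot]

/-- For `c` μ-strongly convex and `L`-smooth and `B_z` with orthonormal columns, the
minimizers `ω, ω'` of `ω ↦ c(v_y + B_z ω)` and `ω ↦ c(v_y' + B_z ω)` satisfy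
`‖ω - ω'‖ ≤ (L/μ) ‖v_y - v_y'‖`. -/
theorem stmt_9 {m p : ℕ} (c : EuclideanSpace ℝ (Fin m) → ℝ) (μ L : ℝ) (hμ : 0 < μ)
    (hsc : StrongConvexOn Set.univ μ c)
    (hdiff : ContDiff ℝ 2 c)
    (hsmooth : LipschitzWith (Real.toNNReal L) (gradient c))
    (Bz : Matrix (Fin m) (Fin p) ℝ) (hBz : Bzᵀ * Bz = 1)
    (vy vy' : Fin m → ℝ) (ω ω' : Fin p → ℝ)
    (hω : IsMinOn (fun w : Fin p → ℝ => c (evec (vy + Bz.mulVec w))) Set.univ ω)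
    (hω' : IsMinOn (fun w : Fin p → ℝ => c (evec (vy' + Bz.mulVec w))) Set.univ ω') :
    ‖evec (ω - ω')‖ ≤ (L / μ) * ‖evec (vy - vy')‖ := by
  classical
  -- strong convexity of the composed functions
  have hg : ∀ v : Fin m → ℝ, StrongConvexOn Set.univ μ
      (fun w : EuclideanSpace ℝ (Fin p) => c (evec (v + Bz.mulVec w))) := by
    intro v
    refine ⟨convex_univ, ?_⟩
    intro x _ y _ a b ha hb hab
    have hlin : Bz.mulVec (a • x + b • y) = a • Bz.mulVec x + b • Bz.mulVec y := by
      rw [Matrix.mulVec_add, Matrix.mulVec_smul, Matrix.mulVec_smul]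
    have hv : a • v + b • v = v := by rw [← add_smul, hab, one_smul]
    have hxy : (v + Bz.mulVec (a • x + b • y)) =
        (a • (v + Bz.mulVec x) + b • (v + Bz.mulVec y) : Fin m → ℝ) := by
      rw [hlin, smul_add, smul_add]
      conv_lhs => rw [← hv]
      abel
    have harg : evec (v + Bz.mulVec (a • x + b • y)) =
        a • evec (v + Bz.mulVec x) + b • evec (v + Bz.mulVec y) := by
        rw [hxy]; simp only [evec, WithLp.toLp_add, WithLp.toLp_smul]
    have hXY : ‖evec (v + Bz.mulVec x) - evec (v + Bz.mulVec y)‖ = ‖x - y‖ := by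
      have h1 : evec (v + Bz.mulVec x) - evec (v + Bz.mulVec y) =
          evec (Bz.mulVec (x - y)) := by
        simp only [evec, ← WithLp.toLp_sub]
        rw [Matrix.mulVec_sub]
        congr 1
        abel
      rw [h1, norm_mulVec_eq hBz]
      show ‖WithLp.toLp 2 (WithLp.ofLp (x - y))‖ = ‖x - y‖
      rfl
    have h := hsc.2 (Set.mem_univ (evec (v + Bz.mulVec x)))
      (Set.mem_univ (evec (v + Bz.mulVec y))) ha hb hab
    rw [hXY] at h
    show c (evec (v + Bz.mulVec (a • x + b • y))) ≤
        a • c (evec (v + Bz.mulVec x)) + b • c (evec (v + Bz.mulVec y)) -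
          a * b * (μ / 2 * ‖x - y‖ ^ 2)
    rw [harg]
    exact h
  have hωE : IsMinOn (fun w : EuclideanSpace ℝ (Fin p) => c (evec (vy + Bz.mulVec w)))
      Set.univ (evec ω) :=
      isMinOn_iff.mpr fun w _ => isMinOn_iff.mp hω w.ofLp (Set.mem_univ _)
  have hω'E : IsMinOn (fun w : EuclideanSpace ℝ (Fin p) => c (evec (vy' + Bz.mulVec w)))
      Set.univ (evec ω') :=
      isMinOn_iff.mpr fun w _ => isMinOn_iff.mp hω' w.ofLp (Set.mem_univ _)
  have h1 : μ / 2 * ‖evec ω - evec ω'‖ ^ 2 ≤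
      c (evec (vy + Bz.mulVec ω')) - c (evec (vy + Bz.mulVec ω)) :=
    minQG hμ.le (hg vy) hωE (evec ω')
  have h2 : μ / 2 * ‖evec ω - evec ω'‖ ^ 2 ≤
      c (evec (vy' + Bz.mulVec ω)) - c (evec (vy' + Bz.mulVec ω')) := by
    have h2' : μ / 2 * ‖evec ω' - evec ω‖ ^ 2 ≤
        c (evec (vy' + Bz.mulVec ω)) - c (evec (vy' + Bz.mulVec ω')) :=
      minQG hμ.le (hg vy') hω'E (evec ω)
    rwa [norm_sub_rev] at h2'
  -- Lipschitz estimate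
  have hlip := lipdiff hdiff hsmooth (evec (Bz.mulVec ω)) (evec (Bz.mulVec ω'))
    (evec vy) (evec vy')
  have hadd : ∀ (a : Fin m → ℝ) (b : Fin p → ℝ),
      (evec a + evec (Bz.mulVec b)) = evec (a + Bz.mulVec b) := fun a b => (WithLp.toLp_add (p := 2) a (Bz.mulVec b)).symm
  rw [hadd vy ω', hadd vy ω, hadd vy' ω', hadd vy' ω] at hlip
  have hBd : ‖evec (Bz.mulVec ω') - evec (Bz.mulVec ω)‖ = ‖evec ω - evec ω'‖ := by
    have hB1 : evec (Bz.mulVec ω') - evec (Bz.mulVec ω) = evec (Bz.mulVec (ω' - ω)) := by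
      simp only [evec, ← WithLp.toLp_sub]
      rw [Matrix.mulVec_sub]
    rw [hB1, norm_mulVec_eq hBz]
    exact norm_sub_rev (evec ω') (evec ω)
  rw [hBd] at hlip
  have hmain : μ * ‖evec ω - evec ω'‖ ^ 2 ≤
      (Real.toNNReal L : ℝ) * ‖evec ω - evec ω'‖ * ‖evec vy - evec vy'‖ := by
    have habs := (abs_le.mp hlip).2
    nlinarith [h1, h2, habs]
  have hgoal1 : ‖evec (ω - ω')‖ = ‖evec ω - evec ω'‖ := rfl
  have hgoal2 : ‖evec (vy - vy')‖ = ‖evec vy - evec vy'‖ := rfl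
  rw [hgoal1, hgoal2]
  have hD0 : (0:ℝ) ≤ ‖evec ω - evec ω'‖ := norm_nonneg _
  have hT0 : (0:ℝ) ≤ ‖evec vy - evec vy'‖ := norm_nonneg _
  rcases le_or_gt 0 L with hL | hL
  · have hLL : (Real.toNNReal L : ℝ) = L := by
      rw [Real.coe_toNNReal']; exact max_eq_left hL
    rw [hLL] at hmain
    rcases eq_or_lt_of_le hD0 with hdz | hdz
    · rw [← hdz]
      exact mul_nonneg (div_nonneg hL hμ.le) hT0
    · rw [div_mul_eq_mul_div, le_div_iff₀ hμ]
      nlinarith [hmain, hdz]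
  · have hL0 : (Real.toNNReal L : ℝ) = 0 := by
      rw [Real.coe_toNNReal']; exact max_eq_right hL.le
    rw [hL0] at hmain
    have hq : μ * ‖evec ω - evec ω'‖ ^ 2 ≤ 0 := by linarith [hmain]
    have hq2 : ‖evec ω - evec ω'‖ ^ 2 ≤ 0 := by nlinarith [hq, hμ]
    have hsq : ‖evec ω - evec ω'‖ ^ 2 = 0 := le_antisymm hq2 (sq_nonneg _)
    have hdz : ‖evec ω - evec ω'‖ = 0 :=
      (pow_eq_zero_iff (by norm_num : (2:ℕ) ≠ 0)).mp hsq
    rw [hdz]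
    rcases eq_or_lt_of_le hT0 with htz | htz
    · rw [← htz, mul_zero]
    · exfalso
      set X : EuclideanSpace ℝ (Fin m) := evec vy with hXdef
      set Y : EuclideanSpace ℝ (Fin m) := evec vy' with hYdef
      set M : EuclideanSpace ℝ (Fin m) := (1/2 : ℝ) • X + (1/2 : ℝ) • Y with hM
      have hl2 := lipdiff hdiff hsmooth 0 (M - X) X M
      have e1 : X + (M - X) = M := by abel
      have e2 : M + (M - X) = Y := by rw [hM]; module
      have e3 : X + (0 : EuclideanSpace ℝ (Fin m)) = X := add_zero X
      have e4 : M + (0 : EuclideanSpace ℝ (Fin m)) = M := add_zero M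
      rw [e1, e2, e3, e4, hL0] at hl2
      simp only [zero_mul] at hl2
      have hmid : (c M - c X) - (c Y - c M) = 0 := abs_nonpos_iff.mp hl2
      have hconv := hsc.2 (Set.mem_univ X) (Set.mem_univ Y)
        (by norm_num : (0:ℝ) ≤ 1/2) (by norm_num : (0:ℝ) ≤ 1/2) (by norm_num : (1:ℝ)/2 + 1/2 = 1)
      rw [← hM] at hconv
      simp only [smul_eq_mul] at hconv
      nlinarith [hconv, hmid, mul_pos hμ (mul_pos htz htz)]
end

section
/- Let δ ∈ (0,1), C ≥ 1, and let ξ = 1 - √δ ∈ (0,1). Suppose a nonnegative sequence (a_t)_{t≥0} satisfies a_0 ≤ ‖x₀‖ and, for all t with the hypothesis a_{t-m} ≤ (C/ξ)(1-ξ)^{max(0, t-m-k)}‖x₀‖ + W/ξ for all 0 ≤ m ≤ k-1, the recursion a_{t+1} ≤ C·Σ_{m=0}^{k-1} Λ_m · a_{t-m} + W where the coefficients satisfy C·Σ_{m=0}^{k-1} Λ_m·(1-ξ)^{-m-1} ≤ 1 - ξ. Then a_{t+1} ≤ (C/ξ)(1-ξ)^{max(0, t+1-k)}‖x₀‖ +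 W/ξ. -/
/-- Induction step of the ISS argument: if `a_{t-m}` satisfies the ISS bound for
`0 ≤ m ≤ k-1`, the recursion `a_{t+1} ≤ C Σ_m Λ_m a_{t-m} + W` holds, and the
coefficients satisfy `C Σ_m Λ_m (1-ξ)^{-m-1} ≤ 1-ξ`, then `a_{t+1}` satisfies the ISS
bound as well. -/
theorem stmt_10 (δ C ξ W X : ℝ) (a Λ : ℕ → ℝ) (k t : ℕ)
    (hδ0 : 0 < δ) (hδ1 : δ < 1) (hC : 1 ≤ C)
    (hξ : ξ = 1 - Real.sqrt δ)
    (hk : 1 ≤ k) (ht : 2 * k - 1 ≤ t)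
    (hX : 0 ≤ X) (hW : 0 ≤ W)
    (ha : ∀ s, 0 ≤ a s) (hΛ : ∀ m, 0 ≤ Λ m)
    (ha0 : a 0 ≤ X)
    (hIH : ∀ m < k, a (t - m) ≤ (C / ξ) * (1 - ξ) ^ (t - m - k) * X + W / ξ)
    (hrec : a (t + 1) ≤ C * (∑ m ∈ Finset.range k, Λ m * a (t - m)) + W)
    (hcoef : C * (∑ m ∈ Finset.range k, Λ m * (1 - ξ) ^ (-(m : ℝ) - 1)) ≤ 1 - ξ) :
    a (t + 1) ≤ (C / ξ) * (1 - ξ) ^ (t + 1 - k) * X + W / ξ := by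
  have hq0 : 0 < Real.sqrt δ := Real.sqrt_pos.mpr hδ0
  have hq1 : Real.sqrt δ < 1 := by
    have := Real.sqrt_lt_sqrt hδ0.le hδ1
    simpa using this
  have hξ0 : 0 < ξ := by rw [hξ]; linarith
  have hq : 1 - ξ = Real.sqrt δ := by rw [hξ]; ring
  set q : ℝ := 1 - ξ with hqdef
  have hq0' : 0 < q := by rw [hq]; exact hq0
  have hq1' : q < 1 := by rw [hq]; exact hq1
  have hrpow : ∀ m : ℕ, q ^ (-(m:ℝ)-1) = (q^(m+1))⁻¹ := by
    intro m
    rw [show -(m:ℝ)-1 = -(((m+1 : ℕ)) : ℝ) by push_cast; ring,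
        Real.rpow_neg hq0'.le, Real.rpow_natCast]
  have hexp : ∀ m, m < k → q ^ (t - m - k) = q ^ (t + 1 - k) * (q ^ (m+1))⁻¹ := by
    intro m hm
    have h : (t - m - k) + (m + 1) = t + 1 - k := by omega
    have : q ^ (t + 1 - k) = q ^ (t - m - k) * q ^ (m + 1) := by
      rw [← pow_add, h]
    rw [this]
    field_simp
  -- termwise bound and rewriting
  have hterm : ∀ m ∈ Finset.range k,
      Λ m * a (t - m) ≤
      (C / ξ) * X * q ^ (t + 1 - k) * (Λ m * q ^ (-(m:ℝ)-1)) + (W / ξ) * Λ m := by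
    intro m hm
    rw [Finset.mem_range] at hm
    have h1 : Λ m * a (t - m) ≤ Λ m * ((C / ξ) * q ^ (t - m - k) * X + W / ξ) :=
      mul_le_mul_of_nonneg_left (hIH m hm) (hΛ m)
    refine h1.trans_eq ?_
    rw [hrpow, hexp m hm]; ring
  have hsum : ∑ m ∈ Finset.range k, Λ m * a (t - m) ≤
      (C / ξ) * X * q ^ (t + 1 - k) * (∑ m ∈ Finset.range k, Λ m * q ^ (-(m:ℝ)-1))
      + (W / ξ) * (∑ m ∈ Finset.range k, Λ m) := by
    calc ∑ m ∈ Finset.range k, Λ m * a (t - m)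
        ≤ ∑ m ∈ Finset.range k,
            ((C / ξ) * X * q ^ (t + 1 - k) * (Λ m * q ^ (-(m:ℝ)-1)) + (W / ξ) * Λ m) :=
          Finset.sum_le_sum hterm
      _ = _ := by rw [Finset.sum_add_distrib, ← Finset.mul_sum, ← Finset.mul_sum]
  -- bound on plain sum of Λ
  have hS0 : C * (∑ m ∈ Finset.range k, Λ m) ≤ q := by
    refine le_trans ?_ hcoef
    have : (∑ m ∈ Finset.range k, Λ m) ≤ ∑ m ∈ Finset.range k, Λ m * q ^ (-(m:ℝ)-1) := by
      refine Finset.sum_le_sum (fun m _ => ?_)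
      have h1 : q ^ (m+1) ≤ 1 := pow_le_one₀ hq0'.le hq1'.le
      have h2 : (1:ℝ) ≤ (q ^ (m+1))⁻¹ := (one_le_inv_iff₀.mpr ⟨pow_pos hq0' _, h1⟩)
      rw [hrpow]
      nlinarith [hΛ m]
    nlinarith [this]
  have hS1 : 0 ≤ ∑ m ∈ Finset.range k, Λ m * q ^ (-(m:ℝ)-1) :=
    Finset.sum_nonneg fun m _ => mul_nonneg (hΛ m) (Real.rpow_nonneg hq0'.le _)
  have hpow : (0:ℝ) ≤ q ^ (t + 1 - k) := pow_nonneg hq0'.le _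
  have hCξ : 0 ≤ C / ξ := div_nonneg (by linarith) hξ0.le
  have hWξ : 0 ≤ W / ξ := div_nonneg hW hξ0.le
  have hmain : a (t + 1) ≤
      (C / ξ) * X * q ^ (t + 1 - k) * (C * ∑ m ∈ Finset.range k, Λ m * q ^ (-(m:ℝ)-1))
      + (W / ξ) * (C * ∑ m ∈ Finset.range k, Λ m) + W := by
    refine hrec.trans ?_
    have := mul_le_mul_of_nonneg_left hsum (by linarith : (0:ℝ) ≤ C)
    nlinarith []
  refine hmain.trans ?_
  have h1 : (C / ξ) * X * q ^ (t + 1 - k) * (C * ∑ m ∈ Finset.range k, Λ m * q ^ (-(m:ℝ)-1))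
      ≤ (C / ξ) * X * q ^ (t + 1 - k) * q := by
    exact mul_le_mul_of_nonneg_left hcoef (by positivity)
  have h2 : (W / ξ) * (C * ∑ m ∈ Finset.range k, Λ m) ≤ (W / ξ) * q :=
    mul_le_mul_of_nonneg_left hS0 hWξ
  have h3 : (W / ξ) * q + W = W / ξ := by
    field_simp
    ring
  have h4 : (C / ξ) * X * q ^ (t + 1 - k) * q ≤ (C / ξ) * q ^ (t + 1 - k) * X := by
    nlinarith [mul_nonneg (mul_nonneg hCξ hX) hpow]
  linarith
end

section
/- Combining the previous two ingredients: let c : ℝ^m → ℝ be μ-strongly convex and L-smooth, B ∈ ℝ^{n×m} with ‖B†‖ ≤ L, ‖A‖ ≤ L, and suppose the one-step problems min{ c(v) : x_{t+1} = A x_t + B v + w_t } and min{ c(v) : x_{t+1}' = A x_t' + B v + w_t } are feasible with minimizers v and v'. Then ‖v - v'‖² ≤ (4L⁶/μ²)·(‖x_t - x_t'‖² + ‖x_{t+1} - x_{t+1}'‖²). -/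
open Matrix

/-- `Bdag` is the Moore–Penrose pseudo-inverse of `B`. -/
def IsMoorePenrose {n m : ℕ} (B : Matrix (Fin n) (Fin m) ℝ)
    (Bdag : Matrix (Fin m) (Fin n) ℝ) : Prop :=
  B * Bdag * B = B ∧ Bdag * B * Bdag = Bdag ∧
    (B * Bdag)ᵀ = B * Bdag ∧ (Bdag * B)ᵀ = Bdag * B

section Aux
variable {k : ℕ}

lemma myLineDeriv (c : EuclideanSpace ℝ (Fin k) → ℝ) (hdiff : ContDiff ℝ 2 c)
    (y d : EuclideanSpace ℝ (Fin k)) (t : ℝ) :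
    HasDerivAt (fun t : ℝ => c (y + t • d)) (inner ℝ (gradient c (y + t • d)) d : ℝ) t := by
  have hline : HasDerivAt (fun t : ℝ => y + t • d) d t := by
    simpa using ((hasDerivAt_id t).smul_const d).const_add y
  have hg : HasGradientAt c (gradient c (y + t • d)) (y + t • d) :=
    (hdiff.differentiable (by norm_num) _).hasGradientAt
  have h := (hasGradientAt_iff_hasFDerivAt.mp hg).comp_hasDerivAt t hline
  simp at h
  simp
  exact h

lemma normsqDeriv (y d : EuclideanSpace ℝ (Fin k)) (μ : ℝ) (t : ℝ) :
    HasDerivAt (fun t : ℝ => μ / 2 * ‖y + t • d‖ ^ 2) (μ * inner ℝ (y + t • d) d : ℝ) t := by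
  have hfun : (fun t : ℝ => μ / 2 * ‖y + t • d‖ ^ 2)
      = fun t : ℝ => μ / 2 * (‖y‖ ^ 2 + 2 * (t * inner ℝ y d) + t ^ 2 * ‖d‖ ^ 2) := by
    funext s
    rw [norm_add_sq_real, real_inner_smul_right, norm_smul]
    simp [mul_pow, sq_abs]
  rw [hfun]
  have h1 : HasDerivAt (fun s : ℝ => ‖y‖ ^ 2 + 2 * (s * inner ℝ y d) + s ^ 2 * ‖d‖ ^ 2)
      (2 * inner ℝ y d + 2 * t * ‖d‖ ^ 2) t := by
    have := (((hasDerivAt_id t).mul_const (inner ℝ y d : ℝ)).const_mul 2).const_add (‖y‖^2)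
    have h2 := ((hasDerivAt_pow 2 t).mul_const (‖d‖^2 : ℝ))
    have h := this.add h2
    simp [mul_comm, mul_assoc, mul_left_comm] at h ⊢
    exact h
  have : HasDerivAt (fun s : ℝ => μ / 2 * (‖y‖ ^ 2 + 2 * (s * inner ℝ y d) + s ^ 2 * ‖d‖ ^ 2)) _ t :=
    h1.const_mul (μ / 2)
  convert this using 1
  rw [inner_add_left, real_inner_smul_left, real_inner_self_eq_norm_sq]
  ring

/-- Strong monotonicity of the gradient of a strongly convex function. -/
lemma strong_mono (c : EuclideanSpace ℝ (Fin k) → ℝ) (μ : ℝ)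
    (hsc : StrongConvexOn Set.univ μ c) (hdiff : ContDiff ℝ 2 c)
    (x y : EuclideanSpace ℝ (Fin k)) :
    μ * ‖x - y‖ ^ 2 ≤ inner ℝ (gradient c x - gradient c y) (x - y) := by
  set d := x - y with hd
  have hconv : ConvexOn ℝ Set.univ fun z => c z - μ / 2 * ‖z‖ ^ 2 :=
    strongConvexOn_iff_convex.mp hsc
  set φ : ℝ → ℝ := fun t => c (y + t • d) - μ / 2 * ‖y + t • d‖ ^ 2 with hφ
  have hφconv : ConvexOn ℝ Set.univ φ := by
    have := hconv.comp_affineMap (AffineMap.lineMap y x : ℝ →ᵃ[ℝ] EuclideanSpace ℝ (Fin k))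
    have heq : ((fun z => c z - μ / 2 * ‖z‖ ^ 2) ∘ (AffineMap.lineMap y x : ℝ →ᵃ[ℝ] _)) = φ := by
      funext t
      simp [φ, AffineMap.lineMap_apply, hd, add_comm]
    rw [heq] at this
    simpa using this
  have hder : ∀ t : ℝ, HasDerivAt φ
      ((inner ℝ (gradient c (y + t • d)) d : ℝ) - μ * inner ℝ (y + t • d) d) t := fun t =>
    (myLineDeriv c hdiff y d t).sub (normsqDeriv y d μ t)
  have h0 : HasDerivAt φ ((inner ℝ (gradient c y) d : ℝ) - μ * inner ℝ y d) 0 := by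
    simpa using hder 0
  have h1 : HasDerivAt φ ((inner ℝ (gradient c x) d : ℝ) - μ * inner ℝ x d) 1 := by
    have := hder 1
    simpa [hd] using this
  have hs1 := hφconv.le_slope_of_hasDerivAt (Set.mem_univ (0:ℝ)) (Set.mem_univ (1:ℝ))
    zero_lt_one h0
  have hs2 := hφconv.slope_le_of_hasDerivAt (Set.mem_univ (0:ℝ)) (Set.mem_univ (1:ℝ))
    zero_lt_one h1
  have hkey : (inner ℝ (gradient c y) d : ℝ) - μ * inner ℝ y d ≤
      (inner ℝ (gradient c x) d : ℝ) - μ * inner ℝ x d := le_trans hs1 hs2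
  have hinner : (inner ℝ (gradient c x - gradient c y) d : ℝ)
      = inner ℝ (gradient c x) d - inner ℝ (gradient c y) d := inner_sub_left _ _ _
  have hxy : (inner ℝ x d : ℝ) - inner ℝ y d = ‖d‖ ^ 2 := by
    rw [← inner_sub_left, ← hd, real_inner_self_eq_norm_sq]
  have hxy' : μ * inner ℝ x d - μ * inner ℝ y d = μ * ‖d‖ ^ 2 := by rw [← mul_sub, hxy]
  rw [hinner]
  linarith [hkey, hxy']

lemma mulVec_norm_le {a b : ℕ} (M : Matrix (Fin a) (Fin b) ℝ) (x : Fin b → ℝ) :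
    ‖evec (M.mulVec x)‖ ≤ matOpNorm M * ‖evec x‖ := by
  have h := (Matrix.toEuclideanLin M).toContinuousLinearMap.le_opNorm (evec x)
  simpa [matOpNorm, evec] using h

lemma grad_orth {n m : ℕ} (c : EuclideanSpace ℝ (Fin m) → ℝ) (hdiff : ContDiff ℝ 2 c)
    (B : Matrix (Fin n) (Fin m) ℝ) (b : Fin n → ℝ) (u z : Fin m → ℝ)
    (hu : B.mulVec u = b) (hz : B.mulVec z = 0)
    (hmin : IsMinOn (fun w : Fin m → ℝ => c (evec w)) {w | B.mulVec w = b} u) :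
    (inner ℝ (gradient c (evec u)) (evec z) : ℝ) = 0 := by
  have hder : HasDerivAt (fun t : ℝ => c (evec u + t • evec z))
      (inner ℝ (gradient c (evec u + (0:ℝ) • evec z)) (evec z) : ℝ) 0 :=
    myLineDeriv c hdiff _ _ 0
  have hmin' : IsLocalMin (fun t : ℝ => c (evec u + t • evec z)) 0 := by
    apply Filter.Eventually.of_forall
    intro t
    have hfeas : u + t • z ∈ {w | B.mulVec w = b} := by
      simp [Matrix.mulVec_add, Matrix.mulVec_smul, hu, hz]
    have h := hmin hfeas
    have he : evec (u + t • z) = evec u + t • evec z := rfl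
    simpa [he] using h
  have h0 := hmin'.hasDerivAt_eq_zero hder
  simpa using h0

end Aux

/-- One-step terminal problem sensitivity: for `c` μ-strongly convex and `L`-smooth,
`‖B†‖ ≤ L`, `‖A‖ ≤ L`, the minimizers `v, v'` of `c` over the affine feasible sets
`{v : x_{t+1} = A x_t + B v + w_t}` and `{v : x_{t+1}' = A x_t' + B v + w_t}` satisfy
`‖v - v'‖² ≤ (4L⁶/μ²)(‖x_t - x_t'‖² + ‖x_{t+1} - x_{t+1}'‖²)`. -/
theorem stmt_16 {n m : ℕ} (c : EuclideanSpace ℝ (Fin m) → ℝ) (μ L : ℝ)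
    (hμ : 0 < μ) (hL : 1 < L)
    (hsc : StrongConvexOn Set.univ μ c)
    (hdiff : ContDiff ℝ 2 c)
    (hsmooth : LipschitzWith (Real.toNNReal L) (gradient c))
    (A : Matrix (Fin n) (Fin n) ℝ) (B : Matrix (Fin n) (Fin m) ℝ)
    (Bdag : Matrix (Fin m) (Fin n) ℝ)
    (hMP : IsMoorePenrose B Bdag)
    (hBdag : matOpNorm Bdag ≤ L) (hA : matOpNorm A ≤ L)
    (xt xt' xt1 xt1' wt : Fin n → ℝ) (v v' : Fin m → ℝ)
    (hvfeas : B.mulVec v = xt1 - A.mulVec xt - wt)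
    (hvmin : IsMinOn (fun u : Fin m → ℝ => c (evec u))
      {u : Fin m → ℝ | B.mulVec u = xt1 - A.mulVec xt - wt} v)
    (hv'feas : B.mulVec v' = xt1' - A.mulVec xt' - wt)
    (hv'min : IsMinOn (fun u : Fin m → ℝ => c (evec u))
      {u : Fin m → ℝ | B.mulVec u = xt1' - A.mulVec xt' - wt} v') :
    ‖evec (v - v')‖ ^ 2 ≤
      (4 * L ^ 6 / μ ^ 2) * (‖evec (xt - xt')‖ ^ 2 + ‖evec (xt1 - xt1')‖ ^ 2) := by
  have hL0 : (0:ℝ) ≤ L := by linarith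
  set g := gradient c with hg
  set Δ : Fin m → ℝ := v - v' with hΔ
  set dd : Fin m → ℝ := Bdag.mulVec (B.mulVec Δ) with hdd
  set zz : Fin m → ℝ := Δ - dd with hzz
  have hBΔ : B.mulVec Δ = (xt1 - xt1') - A.mulVec (xt - xt') := by
    rw [hΔ, Matrix.mulVec_sub, hvfeas, hv'feas, Matrix.mulVec_sub]
    abel
  have hBz : B.mulVec zz = 0 := by
    rw [hzz, Matrix.mulVec_sub, hdd, Matrix.mulVec_mulVec, Matrix.mulVec_mulVec, hMP.1, sub_self]
  have horth1 : (inner ℝ (g (evec v)) (evec zz) : ℝ) = 0 :=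
    grad_orth c hdiff B _ v zz hvfeas hBz hvmin
  have horth2 : (inner ℝ (g (evec v')) (evec zz) : ℝ) = 0 :=
    grad_orth c hdiff B _ v' zz hv'feas hBz hv'min
  have hev : evec v - evec v' = evec Δ := rfl
  have hmono := strong_mono c μ hsc hdiff (evec v) (evec v')
  rw [hev] at hmono
  have hsplit : evec Δ = evec dd + evec zz := by
    have hdz : dd + zz = Δ := by rw [hzz]; abel
    rw [← hdz]; rfl
  have hinner : (inner ℝ (g (evec v) - g (evec v')) (evec Δ) : ℝ)
      = inner ℝ (g (evec v) - g (evec v')) (evec dd) := by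
    rw [hsplit, inner_add_right, inner_sub_left, inner_sub_left, horth1, horth2]
    ring
  have hlip : ‖g (evec v) - g (evec v')‖ ≤ L * ‖evec Δ‖ := by
    have h := hsmooth.dist_le_mul (evec v) (evec v')
    rw [dist_eq_norm, dist_eq_norm] at h
    rw [hev] at h
    simpa [Real.coe_toNNReal L hL0] using h
  have hcs : (inner ℝ (g (evec v) - g (evec v')) (evec dd) : ℝ)
      ≤ ‖g (evec v) - g (evec v')‖ * ‖evec dd‖ := real_inner_le_norm _ _
  set s := ‖evec Δ‖ with hs
  set r := ‖evec dd‖ with hr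
  set a := ‖evec (xt - xt')‖ with ha
  set b := ‖evec (xt1 - xt1')‖ with hb
  have hs0 : 0 ≤ s := norm_nonneg _
  have hr0 : 0 ≤ r := norm_nonneg _
  have ha0 : 0 ≤ a := norm_nonneg _
  have hb0 : 0 ≤ b := norm_nonneg _
  have hkey : μ * s ^ 2 ≤ L * s * r := by
    calc μ * s ^ 2 ≤ inner ℝ (g (evec v) - g (evec v')) (evec Δ) := hmono
    _ = inner ℝ (g (evec v) - g (evec v')) (evec dd) := hinner
    _ ≤ ‖g (evec v) - g (evec v')‖ * r := hcs
    _ ≤ (L * s) * r := mul_le_mul_of_nonneg_right hlip hr0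
  have hrb : r ≤ L * b + L ^ 2 * a := by
    have h1 : r ≤ matOpNorm Bdag * ‖evec (B.mulVec Δ)‖ := mulVec_norm_le Bdag _
    have h2 : ‖evec (B.mulVec Δ)‖ ≤ b + L * a := by
      rw [hBΔ]
      have he : evec ((xt1 - xt1') - A.mulVec (xt - xt'))
          = evec (xt1 - xt1') - evec (A.mulVec (xt - xt')) := rfl
      rw [he]
      refine (norm_sub_le _ _).trans (add_le_add le_rfl ?_)
      exact (mulVec_norm_le A _).trans (mul_le_mul_of_nonneg_right hA (norm_nonneg _))
    calc r ≤ matOpNorm Bdag * ‖evec (B.mulVec Δ)‖ := h1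
    _ ≤ L * (b + L * a) := by
        apply mul_le_mul hBdag h2 (norm_nonneg _) hL0
    _ = L * b + L ^ 2 * a := by ring
  -- goal as plain vec equalities
  rw [div_mul_eq_mul_div, le_div_iff₀ (by positivity)]
  -- s^2 * μ^2 ≤ 4 * L^6 * (a^2 + b^2)
  have hμs : μ * s ≤ L * r := by
    rcases eq_or_lt_of_le hs0 with h0 | hpos
    · rw [← h0]; simp; positivity
    · have : (μ * s) * s ≤ (L * r) * s := by
        calc (μ * s) * s = μ * s ^ 2 := by ring
        _ ≤ L * s * r := hkey
        _ = (L * r) * s := by ring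
      exact le_of_mul_le_mul_right this hpos
  have h1 : (μ * s) ^ 2 ≤ (L * (L * b + L ^ 2 * a)) ^ 2 := by
    apply pow_le_pow_left₀ (by positivity)
    exact hμs.trans (mul_le_mul_of_nonneg_left hrb hL0)
  have hL4 : L ^ 4 ≤ L ^ 6 := pow_le_pow_right₀ hL.le (by norm_num)
  have hL5 : L ^ 5 ≤ L ^ 6 := pow_le_pow_right₀ hL.le (by norm_num)
  nlinarith [mul_le_mul_of_nonneg_right hL4 (sq_nonneg b),
    mul_le_mul_of_nonneg_right hL5 (mul_nonneg ha0 hb0),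
    mul_nonneg (pow_nonneg hL0 6) (sq_nonneg (a - b)), sq_nonneg s, sq_nonneg μ]
end
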